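/- Let k be a field of characteristic ≠ 2, φ ∈ k[t][x] a monic quadratic polynomial with all iterates separable, n ≥ 1 such that φ⁽ⁿ⁾ is irreducible over k^sep(t). Suppose c_{n+1} (the (n+1)-st term of the adjusted post-critical orbit) has a primitive prime divisor f ∈ k^sep[t] appearing to odd multiplicity, i.e., c_{n+1} = f^{2r+1}·g with f irreducible, gcd(f,g)=1, and f ∤ cᵢ for all i ≤ n with cᵢ ≠ 0. Then c_{n+1} is not a square in K_n, the splitting field of φ⁽ⁿ⁾ over k^sep(t). -/

import Mathlib

open Polynomial IntermediateField
open scoped nonZeroDivisors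


noncomputable def polyIterate {R : Type*} [CommRing R] (φ : Polynomial R) (n : ℕ) :
    Polynomial R :=
  (fun g => g.comp φ)^[n] X

section PolyIterate

variable {R S : Type*} [CommRing R] [CommRing S]

lemma polyIterate_zero (φ : Polynomial R) : polyIterate φ 0 = X := rfl

lemma polyIterate_succ (φ : Polynomial R) (n : ℕ) :
    polyIterate φ (n + 1) = (polyIterate φ n).comp φ := by
  unfold polyIterate
  rw [Function.iterate_succ_apply']

lemma polyIterate_one (φ : Polynomial R) : polyIterate φ 1 = φ := by
  rw [polyIterate_succ, polyIterate_zero, X_comp]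

lemma polyIterate_map (ρ : R →+* S) (φ : Polynomial R) (n : ℕ) :
    (polyIterate φ n).map ρ = polyIterate (φ.map ρ) n := by
  induction n with
  | zero => simp [polyIterate_zero]
  | succ n ih => rw [polyIterate_succ, polyIterate_succ, Polynomial.map_comp, ih]

lemma polyIterate_add (φ : Polynomial R) (a b : ℕ) :
    polyIterate φ (a + b) = (polyIterate φ a).comp (polyIterate φ b) := by
  induction b with
  | zero => simp [polyIterate_zero]
  | succ b ih =>
      rw [← Nat.add_assoc, polyIterate_succ, polyIterate_succ, ih, Polynomial.comp_assoc]

lemma polyIterate_eval (φ : Polynomial R) (n : ℕ) (a : R) :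
    (polyIterate φ n).eval a = (fun x => φ.eval x)^[n] a := by
  induction n generalizing a with
  | zero => simp [polyIterate_zero]
  | succ n ih =>
      rw [polyIterate_succ, eval_comp, ih, Function.iterate_succ_apply]

lemma quad_monic (a b : R) [Nontrivial R] : ((X - C a) ^ 2 - C b).Monic := by
  have h1 : ((X - C a) ^ 2).Monic := (monic_X_sub_C a).pow 2
  have : ((X - C a) ^ 2 - C b) = (X - C a) ^ 2 + (-C b) := by ring
  rw [this]
  refine h1.add_of_left ?_
  have h2 : ((X - C a) ^ 2).degree = 2 := by
    rw [degree_eq_natDegree h1.ne_zero]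
    norm_cast
    simpa using (monic_X_sub_C a).natDegree_pow 2
  rw [h2]
  exact lt_of_le_of_lt (degree_neg (C b) ▸ degree_C_le) (by norm_num)

lemma quad_natDegree (a b : R) [Nontrivial R] : ((X - C a) ^ 2 - C b).natDegree = 2 := by
  rw [natDegree_sub_C]
  simpa using (monic_X_sub_C a).natDegree_pow 2

lemma polyIterate_monic (a b : R) [Nontrivial R] (n : ℕ) :
    (polyIterate ((X - C a) ^ 2 - C b) n).Monic := by
  induction n with
  | zero => simpa [polyIterate_zero] using monic_X
  | succ n ih =>
      rw [polyIterate_succ]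
      exact ih.comp (quad_monic a b) (by rw [quad_natDegree]; norm_num)

lemma quad_derivative (a b : R) :
    derivative ((X - C a) ^ 2 - C b) = C 2 * (X - C a) := by
  simp only [derivative_sub, derivative_pow, derivative_C, sub_zero, derivative_X, derivative_X_sub_C]
  ring

lemma polyIterate_derivative (a b : R) (n : ℕ) :
    derivative (polyIterate ((X - C a) ^ 2 - C b) n)
      = C 2 ^ n * ∏ i ∈ Finset.range n, (polyIterate ((X - C a) ^ 2 - C b) i - C a) := by
  set ψ := (X - C a) ^ 2 - C b with hψ
  induction n with
  | zero => simp [polyIterate_zero]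
  | succ n ih =>
      rw [polyIterate_succ, derivative_comp, ih, quad_derivative]
      have hcomp : (C 2 ^ n * ∏ i ∈ Finset.range n, (polyIterate ψ i - C a)).comp ψ
          = C 2 ^ n * ∏ i ∈ Finset.range n, (polyIterate ψ (i + 1) - C a) := by
        have : ∀ p : Polynomial R, p.comp ψ = (aeval ψ) p := by
          intro p; rw [aeval_def, eval₂_eq_eval_map]; simp [comp, eval₂_eq_eval_map]
        rw [this, map_mul, map_pow, map_prod]
        congr 1
        · congr 1; rw [← this, C_comp]
        · refine Finset.prod_congr rfl (fun i _ => ?_)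
          rw [← this, sub_comp, C_comp, ← polyIterate_succ]
      rw [hcomp, Finset.prod_range_succ']
      rw [polyIterate_zero]
      ring

end PolyIterate

lemma sepClosed_infinite (κ : Type*) [Field κ] [IsSepClosed κ] (h2 : (2:κ) ≠ 0) : Infinite κ := by
  by_contra hfin
  rw [not_infinite_iff_finite] at hfin
  have hchar : ringChar κ ≠ 2 := by
    intro hc
    have := (ringChar.spec κ 2)
    rw [hc] at this
    exact h2 (by exact_mod_cast this.mpr ⟨1, rfl⟩)
  obtain ⟨a, ha⟩ := FiniteField.exists_nonsquare (F := κ) hchar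
  have ha0 : a ≠ 0 := fun h => ha ⟨0, by simp [h]⟩
  have hsep : (X ^ 2 - C a : Polynomial κ).Separable := by
    refine separable_X_pow_sub_C a ?_ ha0
    exact_mod_cast h2
  have hdeg : (X ^ 2 - C a : Polynomial κ).degree ≠ 0 := by
    have : (X ^ 2 - C a : Polynomial κ).degree = 2 := by
      simpa using Polynomial.degree_X_pow_sub_C (by norm_num : 0 < 2) a
    rw [this]; norm_num
  obtain ⟨x, hx⟩ := IsSepClosed.exists_root (X ^ 2 - C a : Polynomial κ) hdeg hsep
  exact ha ⟨x, by
    have := hx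
    simp only [IsRoot, eval_sub, eval_pow, eval_X, eval_C, sub_eq_zero] at this
    rw [← this]; ring⟩


lemma aux_unramified
    {A F K B : Type*} [CommRing A] [IsDomain A] [IsDedekindDomain A]
    [Field F] [Field K] [Algebra A F] [IsFractionRing A F]
    [Algebra F K] [Algebra A K] [IsScalarTower A F K]
    [FiniteDimensional F K] [IsGalois F K]
    [CommRing B] [IsDomain B] [Algebra A B] [Algebra B K] [IsScalarTower A B K]
    [IsIntegralClosure B A K]
    (p : Ideal A) [hpm : p.IsMaximal] (hp : p ≠ ⊥)
    (Q : Ideal B) [hQ : Q.IsPrime]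
    (hQp : Q.comap (algebraMap A B) = p)
    (S : Finset B)
    (hgen : Algebra.adjoin F ((fun b => algebraMap B K b) '' (S : Set B)) = ⊤)
    (hstab : ∀ (σ : K ≃ₐ[F] K), ∀ b ∈ S, ∃ b' ∈ S,
      σ (algebraMap B K b) = algebraMap B K b')
    (hdist : ∀ b ∈ S, ∀ b' ∈ S, b ≠ b' → b - b' ∉ Q)
    (hinf : Set.Infinite (Set.range ((Ideal.Quotient.mk Q).comp (algebraMap A B))))
    : ¬ (p.map (algebraMap A B) ≤ Q ^ 2) := by
  intro hle
  classical
  haveI hsepFK : Algebra.IsSeparable F K := IsGalois.to_isSeparable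
  haveI : IsDedekindDomain B := IsIntegralClosure.isDedekindDomain A F K B
  have halgK : Function.Injective (algebraMap A K) := by
    rw [IsScalarTower.algebraMap_eq A F K]
    exact (algebraMap F K).injective.comp (IsFractionRing.injective A F)
  have halgAB : Function.Injective (algebraMap A B) := by
    have h := IsScalarTower.algebraMap_eq A B K
    intro x y hxy
    apply halgK
    rw [h]
    simp only [RingHom.comp_apply, hxy]
  haveI : Module.IsTorsionFree A B := (Module.isTorsionFree_iff_algebraMap_injective (R := A) (A := B)).mpr halgAB
  haveI : Module.Finite A B := IsIntegralClosure.finite A F K B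
  haveI : IsFractionRing B K := IsIntegralClosure.isFractionRing_of_finite_extension A F K B
  have hBK : Function.Injective (algebraMap B K) := IsFractionRing.injective B K
  have hQ0 : Q ≠ ⊥ := by
    intro h
    exact hp (by rw [← hQp, h, Ideal.comap_bot_of_injective _ halgAB])
  haveI hQmax : Q.IsMaximal := hQ.isMaximal hQ0
  -- the residue ring
  set π := Ideal.Quotient.mk Q with hπ
  -- choice of conjugate images
  choose T hT1 hT2 using hstab
  -- enumeration of S
  set e := S.equivFin with he
  have einj : Function.Injective (fun x : {x // x ∈ S} => (e x : ℕ)) := by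
    intro x y h
    exact e.injective (Fin.val_injective h)
  -- polynomials
  set q : (K ≃ₐ[F] K) → Polynomial (B ⧸ Q) :=
    fun σ => ∑ x : {x // x ∈ S}, monomial (e x : ℕ) (π (x.1 - T σ x.1 x.2)) with hq
  have hqeval : ∀ σ, ∀ v : B ⧸ Q, (q σ).eval v = ∑ x : {x // x ∈ S}, v ^ (e x : ℕ) * π (x.1 - T σ x.1 x.2) := by
    intro σ v
    rw [hq]
    rw [eval_finset_sum]
    refine Finset.sum_congr rfl (fun x _ => ?_)
    rw [eval_monomial]
    ring
  have hqne : ∀ σ : K ≃ₐ[F] K, σ ≠ 1 → q σ ≠ 0 := by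
    intro σ hσ1
    have : ∃ b ∈ S, σ (algebraMap B K b) ≠ algebraMap B K b := by
      by_contra hcon
      push_neg at hcon
      apply hσ1
      have hsub : Algebra.adjoin F ((fun b => algebraMap B K b) '' (S : Set B)) ≤ AlgHom.equalizer (σ : K →ₐ[F] K) (AlgHom.id F K) := by
        rw [Algebra.adjoin_le_iff]
        rintro x ⟨b, hb, rfl⟩
        exact hcon b hb
      rw [hgen, top_le_iff] at hsub
      refine AlgEquiv.ext fun x => ?_
      show σ x = x
      have hx : x ∈ AlgHom.equalizer (σ : K →ₐ[F] K) (AlgHom.id F K) := hsub ▸ Algebra.mem_top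
      exact hx
    obtain ⟨b₀, hb₀S, hb₀⟩ := this
    set x₀ : {x // x ∈ S} := ⟨b₀, hb₀S⟩ with hx₀
    have hcoeff : (q σ).coeff (e x₀ : ℕ) = π (b₀ - T σ b₀ hb₀S) := by
      rw [hq, finset_sum_coeff]
      rw [Finset.sum_eq_single x₀]
      · simp [coeff_monomial]; rfl
      · intro x _ hxx
        rw [coeff_monomial, if_neg (fun h => hxx (einj h))]
      · intro h
        exact absurd (Finset.mem_univ x₀) h
    intro hq0
    have hz : π (b₀ - T σ b₀ hb₀S) = 0 := by rw [← hcoeff, hq0, coeff_zero]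
    rw [Ideal.Quotient.eq_zero_iff_mem] at hz
    have hbne : b₀ ≠ T σ b₀ hb₀S := by
      intro h
      apply hb₀
      rw [hT2 σ b₀ hb₀S, ← h]
    exact hdist b₀ hb₀S _ (hT1 σ b₀ hb₀S) hbne hz
  -- choose the parameter
  set G₁ : Finset (K ≃ₐ[F] K) := Finset.univ.erase 1 with hG₁
  set qq : Polynomial (B ⧸ Q) := ∏ σ ∈ G₁, q σ with hqq
  have hqqne : qq ≠ 0 := by
    rw [hqq]
    refine Finset.prod_ne_zero_iff.mpr (fun σ hσ => hqne σ ?_)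
    exact (Finset.mem_erase.mp hσ).1
  obtain ⟨v, hvmem, hvnot⟩ := hinf.exists_notMem_finset qq.roots.toFinset
  obtain ⟨a, ha⟩ := hvmem
  have hveval : ∀ σ ∈ G₁, (q σ).eval v ≠ 0 := by
    intro σ hσ hev
    apply hvnot
    rw [Multiset.mem_toFinset, mem_roots hqqne]
    rw [hqq, IsRoot, eval_prod]; exact Finset.prod_eq_zero hσ hev
  -- the primitive element
  set μ : B := algebraMap A B a with hμ
  have hπμ : π μ = v := by simpa using ha
  set θB : B := ∑ x : {x // x ∈ S}, μ ^ (e x : ℕ) * x.1 with hθB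
  set θ : K := algebraMap B K θB with hθ
  set θσ : (K ≃ₐ[F] K) → B := fun σ => ∑ x : {x // x ∈ S}, μ ^ (e x : ℕ) * T σ x.1 x.2 with hθσ
  have hσfixμ : ∀ σ : K ≃ₐ[F] K, σ (algebraMap B K μ) = algebraMap B K μ := by
    intro σ
    rw [hμ, ← IsScalarTower.algebraMap_apply A B K, IsScalarTower.algebraMap_apply A F K]
    exact σ.commutes _
  have hσθ : ∀ σ : K ≃ₐ[F] K, σ θ = algebraMap B K (θσ σ) := by
    intro σ
    rw [hθ, hθB, hθσ]
    simp only [map_sum, map_mul, map_pow]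
    refine Finset.sum_congr rfl (fun x _ => ?_)
    rw [hσfixμ, hT2 σ x.1 x.2]
  have hred : ∀ σ : K ≃ₐ[F] K, π (θB - θσ σ) = (q σ).eval v := by
    intro σ
    rw [hqeval, hθB, hθσ, ← Finset.sum_sub_distrib, map_sum]
    refine Finset.sum_congr rfl (fun x _ => ?_)
    rw [← mul_sub, map_mul, map_pow, hπμ]
  have hkey : ∀ σ : K ≃ₐ[F] K, σ ≠ 1 → θB - θσ σ ∉ Q := by
    intro σ hσ h
    exact hveval σ (Finset.mem_erase.mpr ⟨hσ, Finset.mem_univ σ⟩)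
      (by rw [← hred σ, Ideal.Quotient.eq_zero_iff_mem]; exact h)
  have hθfix : ∀ σ : K ≃ₐ[F] K, σ θ = θ → σ = 1 := by
    intro σ hσθeq
    by_contra hσ1
    apply hkey σ hσ1
    have : θσ σ = θB := hBK (by rw [← hσθ σ, hσθeq])
    rw [this, sub_self]
    exact Q.zero_mem
  have hconj_inj : Function.Injective (fun σ : K ≃ₐ[F] K => σ θ) := by
    intro σ σ' h
    simp only at h
    have h2 : (σ'⁻¹ * σ) θ = θ := by
      rw [AlgEquiv.mul_apply, h, ← AlgEquiv.mul_apply, inv_mul_cancel, AlgEquiv.one_apply]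
    exact (inv_mul_eq_one.mp (hθfix _ h2)).symm
  -- θ is a primitive element
  have hθint : IsIntegral F θ := Algebra.IsIntegral.isIntegral θ
  set m : Polynomial F := minpoly F θ with hm
  set mK : Polynomial K := m.map (algebraMap F K) with hmK
  have hmne : m ≠ 0 := minpoly.ne_zero hθint
  have hmKne : mK ≠ 0 := by
    rw [hmK]
    exact Polynomial.map_ne_zero hmne
  have hroot : ∀ σ : K ≃ₐ[F] K, mK.eval (σ θ) = 0 := by
    intro σ
    have h1 : (aeval (σ θ)) m = σ ((aeval θ) m) := aeval_algHom_apply (σ : K →ₐ[F] K) θ m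
    rw [minpoly.aeval, map_zero] at h1
    rw [hmK, eval_map, ← aeval_def, h1]
  set Sc : Finset K := Finset.univ.image (fun σ : K ≃ₐ[F] K => σ θ) with hSc
  have hScCard : Sc.card = Module.finrank F K := by
    rw [hSc, Finset.card_image_of_injective _ hconj_inj, Finset.card_univ,
      ← Nat.card_eq_fintype_card, IsGalois.card_aut_eq_finrank]
  have hScle : Sc.val ≤ mK.roots := by
    rw [Multiset.le_iff_count]
    intro c
    by_cases hc : c ∈ Sc
    · rw [Multiset.count_eq_one_of_mem Sc.nodup (Finset.mem_val.mpr hc)]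
      rw [Multiset.one_le_count_iff_mem, mem_roots hmKne]
      obtain ⟨σ, _, rfl⟩ := Finset.mem_image.mp hc
      exact hroot σ
    · rw [Multiset.count_eq_zero_of_notMem (fun hm => hc (Finset.mem_val.mp hm))]
      exact Nat.zero_le _
  have hcard2 : Multiset.card mK.roots ≤ Sc.card := by
    calc Multiset.card mK.roots ≤ mK.natDegree := card_roots' mK
    _ = m.natDegree := natDegree_map _
    _ = Module.finrank F F⟮θ⟯ := (IntermediateField.adjoin.finrank hθint).symm
    _ ≤ Module.finrank F K := by
        have := Submodule.finrank_le (Subalgebra.toSubmodule (IntermediateField.toSubalgebra F⟮θ⟯))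
        exact this
    _ = Sc.card := hScCard.symm
  have hrootsEq : mK.roots = Sc.val := (Multiset.eq_of_le_of_card_le hScle hcard2).symm
  have hdeg : m.natDegree = Module.finrank F K := by
    have h1 : Sc.card ≤ Multiset.card mK.roots := by
      rw [hrootsEq]; exact le_rfl
    have h2 : Multiset.card mK.roots ≤ m.natDegree := by
      calc Multiset.card mK.roots ≤ mK.natDegree := card_roots' mK
      _ = m.natDegree := natDegree_map _
    have h3 : m.natDegree ≤ Module.finrank F K := by
      rw [← IntermediateField.adjoin.finrank hθint]
      have := Submodule.finrank_le (Subalgebra.toSubmodule (IntermediateField.toSubalgebra F⟮θ⟯))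
      exact this
    omega
  have hprim : IntermediateField.adjoin F {θ} = (⊤ : IntermediateField F K) := by
    refine IntermediateField.eq_of_le_of_finrank_eq le_top ?_
    rw [IntermediateField.finrank_top']
    rw [IntermediateField.adjoin.finrank hθint, hdeg]
  have hadj : Algebra.adjoin F {θ} = (⊤ : Subalgebra F K) := by
    rw [← IntermediateField.adjoin_simple_toSubalgebra_of_isAlgebraic hθint.isAlgebraic, hprim]
    rfl
  -- apply the conductor-different machinery
  have hθBint : IsIntegral A θB := IsIntegralClosure.isIntegral A K θB
  -- separability of fraction rings
  letI : Algebra (FractionRing A) (FractionRing B) := FractionRing.liftAlgebra A (FractionRing B)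
  haveI : Algebra.IsSeparable (FractionRing A) (FractionRing B) := by
    let e₁ : F ≃+* FractionRing A := (FractionRing.algEquiv A F).symm.toRingEquiv
    let e₂ : K ≃+* FractionRing B := (FractionRing.algEquiv B K).symm.toRingEquiv
    refine Algebra.IsSeparable.of_equiv_equiv e₁ e₂ ?_
    apply IsLocalization.ringHom_ext A⁰
    ext x
    simp only [RingHom.comp_apply, RingEquiv.coe_toRingHom]
    have h1 : e₁ (algebraMap A F x) = algebraMap A (FractionRing A) x := by
      have := (FractionRing.algEquiv A F).symm.commutes x
      exact this
    have h2 : (algebraMap (FractionRing A) (FractionRing B)) (algebraMap A (FractionRing A) x)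
        = algebraMap A (FractionRing B) x := by
      rw [← IsScalarTower.algebraMap_apply A (FractionRing A) (FractionRing B)]
    have h3 : algebraMap A (FractionRing B) x = algebraMap B (FractionRing B) (algebraMap A B x) := by
      rw [← IsScalarTower.algebraMap_apply A B (FractionRing B)]
    have h4 : e₂ (algebraMap F K (algebraMap A F x)) = algebraMap B (FractionRing B) (algebraMap A B x) := by
      rw [← IsScalarTower.algebraMap_apply A F K]
      rw [IsScalarTower.algebraMap_apply A B K]
      have := (FractionRing.algEquiv B K).symm.commutes (algebraMap A B x)
      exact this
    rw [h1, h2, h3, ← h4]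
  have hQdiff : Q ∣ differentIdeal A B := by
    have h2 : Q ^ 2 ∣ p.map (algebraMap A B) := Ideal.dvd_iff_le.mpr hle
    have := pow_sub_one_dvd_differentIdeal A Q 2 hp h2
    simpa using this
  have hcond := conductor_mul_differentIdeal A F K θB (by
    have : algebraMap B K θB = θ := rfl
    rw [this, hadj])
  -- w ∈ Q
  set w : B := aeval θB (derivative (minpoly A θB)) with hw
  have hwQ : w ∈ Q := by
    have h1 : Ideal.span {w} ≤ differentIdeal A B := by
      rw [← hcond]
      exact Ideal.mul_le_right
    exact (h1.trans (Ideal.le_of_dvd hQdiff)) (Ideal.mem_span_singleton_self w)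
  -- compute w
  have hminrel : mK = ((minpoly A θB).map (algebraMap A K)) := by
    have h1 : minpoly F (algebraMap B K θB) = (minpoly A θB).map (algebraMap A F) :=
      minpoly.isIntegrallyClosed_eq_field_fractions F K hθBint
    rw [hmK, hm, hθ, h1, Polynomial.map_map, ← IsScalarTower.algebraMap_eq A F K]
  have hwK : algebraMap B K w = mK.derivative.eval θ := by
    rw [hw]
    have h1 : algebraMap B K (aeval θB (derivative (minpoly A θB)))
        = aeval θ (derivative (minpoly A θB)) := by
      rw [hθ]
      exact (aeval_algHom_apply (IsScalarTower.toAlgHom A B K) θB _).symm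
    rw [h1, aeval_def, eval₂_eq_eval_map, ← derivative_map, ← hminrel]
  -- factor mK
  have hmKmonic : mK.Monic := (minpoly.monic hθint).map _
  have hmKsplits : Splits mK := by
    rw [hmK]
    exact Normal.splits (IsGalois.to_normal) θ
  have hfact : mK = (Multiset.map (fun a => X - C a) mK.roots).prod :=
    hmKsplits.eq_prod_roots_of_monic hmKmonic
  have hθSc : θ ∈ Sc := by
    rw [hSc, Finset.mem_image]
    exact ⟨1, Finset.mem_univ 1, rfl⟩
  have hScval : mK.roots = θ ::ₘ (Sc.erase θ).val := by
    rw [hrootsEq, Finset.erase_val, Multiset.cons_erase hθSc]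
  set RR : Polynomial K := (Multiset.map (fun a => X - C a) (Sc.erase θ).val).prod with hRR
  have hfact2 : mK = (X - C θ) * RR := by
    rw [hfact, hScval, Multiset.map_cons, Multiset.prod_cons]
  have hevalRR : mK.derivative.eval θ = RR.eval θ := by
    rw [hfact2, derivative_mul]
    simp [derivative_X_sub_C]
  have hRReval : RR.eval θ = ∏ c ∈ Sc.erase θ, (θ - c) := by
    rw [hRR, eval_multiset_prod, Multiset.map_map]
    rw [Finset.prod_eq_multiset_prod]
    congr 1
    rw [Finset.erase_val]
    apply Multiset.map_congr rfl
    intro c _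
    simp
  -- identify the erase with the non-identity automorphisms
  have hScerase : Sc.erase θ = Finset.image (fun σ : K ≃ₐ[F] K => σ θ) (Finset.univ.erase 1) := by
    ext c
    constructor
    · intro hc
      have hc1 := (Finset.mem_erase.mp hc).1
      have hc2 := (Finset.mem_erase.mp hc).2
      rw [hSc] at hc2
      obtain ⟨σ, -, rfl⟩ := Finset.mem_image.mp hc2
      exact Finset.mem_image.mpr ⟨σ, Finset.mem_erase.mpr
        ⟨fun h => hc1 (by rw [h, AlgEquiv.one_apply]), Finset.mem_univ σ⟩, rfl⟩
    · intro hc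
      obtain ⟨σ, hσ, rfl⟩ := Finset.mem_image.mp hc
      have hσ1 := (Finset.mem_erase.mp hσ).1
      refine Finset.mem_erase.mpr ⟨fun h => hσ1 (hθfix σ h), ?_⟩
      rw [hSc]
      exact Finset.mem_image.mpr ⟨σ, Finset.mem_univ σ, rfl⟩
  have hprodform : ∏ c ∈ Sc.erase θ, (θ - c) = ∏ σ ∈ Finset.univ.erase (1 : K ≃ₐ[F] K), (θ - σ θ) := by
    rw [hScerase]
    rw [Finset.prod_image]
    intro σ hσ σ' hσ' h
    exact hconj_inj h
  -- now w = product of (θB - θσ σ)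
  have hwprod : w = ∏ σ ∈ Finset.univ.erase (1 : K ≃ₐ[F] K), (θB - θσ σ) := by
    apply hBK
    rw [hwK, hevalRR, hRReval, hprodform, map_prod]
    refine Finset.prod_congr rfl (fun σ _ => ?_)
    rw [map_sub, hσθ σ, hθ]
  -- contradiction
  have hπw : π w ≠ 0 := by
    rw [hwprod, map_prod]
    refine Finset.prod_ne_zero_iff.mpr (fun σ hσ => ?_)
    rw [hred σ]
    exact hveval σ hσ
  exact hπw (by rw [hπ, Ideal.Quotient.eq_zero_iff_mem]; exact hwQ)


set_option maxHeartbeats 1000000 in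
set_option synthInstance.maxHeartbeats 400000 in
lemma main_core {κ : Type*} [Field κ] [Infinite κ] (h2κ : (2:κ) ≠ 0)
    (γA c1A : Polynomial κ) (n : ℕ) (hn : 1 ≤ n)
    (hsepA : ∀ m, 1 ≤ m → (((polyIterate ((X - C γA) ^ 2 - C c1A) m)).map
      (algebraMap (Polynomial κ) (RatFunc κ))).Separable)
    (f g cA : Polynomial κ) (hf : Irreducible f) (r : ℕ)
    (hfacA : cA = f ^ (2 * r + 1) * g) (hcop : IsCoprime f g)
    (hprimA : ∀ m, 1 ≤ m → m ≤ n →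
      (polyIterate ((X - C γA) ^ 2 - C c1A) m).eval γA ≠ 0 →
      ¬ f ∣ (polyIterate ((X - C γA) ^ 2 - C c1A) m).eval γA) :
    ¬ ∃ s : ((polyIterate ((X - C γA) ^ 2 - C c1A) n).map
        (algebraMap (Polynomial κ) (RatFunc κ))).SplittingField,
      s ^ 2 = algebraMap (RatFunc κ)
        ((polyIterate ((X - C γA) ^ 2 - C c1A) n).map
          (algebraMap (Polynomial κ) (RatFunc κ))).SplittingField
        (algebraMap (Polynomial κ) (RatFunc κ) cA) := by
  classical
  set ψ : Polynomial (Polynomial κ) := (X - C γA) ^ 2 - C c1A with hψ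
  set P : Polynomial (RatFunc κ) :=
    (polyIterate ψ n).map (algebraMap (Polynomial κ) (RatFunc κ)) with hPdef
  rintro ⟨s, hs⟩
  have hAFinj : Function.Injective (algebraMap (Polynomial κ) (RatFunc κ)) :=
    IsFractionRing.injective (Polynomial κ) (RatFunc κ)
  -- E m ≠ 0 for m ≥ 1
  have hEzero : (polyIterate ψ 0).eval γA = γA := by simp [polyIterate_zero]
  have hEne : ∀ m, 1 ≤ m → (polyIterate ψ m).eval γA ≠ 0 := by
    intro m hm hE0
    obtain ⟨u, v, huv⟩ := hsepA m hm
    set algF := algebraMap (Polynomial κ) (RatFunc κ) with halgF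
    set Pm : Polynomial (RatFunc κ) := (polyIterate ψ m).map algF with hPm
    have hPmγ : Pm.eval (algF γA) = algF ((polyIterate ψ m).eval γA) := by
      rw [hPm, eval_map, eval₂_at_apply]
    have hder : (derivative (polyIterate ψ m)).eval γA = 0 := by
      rw [hψ, polyIterate_derivative]
      rw [eval_mul, eval_prod]
      refine mul_eq_zero_of_right _ ?_
      refine Finset.prod_eq_zero (Finset.mem_range.mpr (by omega : 0 < m)) ?_
      rw [eval_sub, eval_C, ← hψ, hEzero, sub_self]
    have hPm'γ : (derivative Pm).eval (algF γA) = 0 := by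
      rw [hPm, derivative_map, eval_map, eval₂_at_apply, hder, map_zero]
    have h1 : (u * Pm + v * derivative Pm).eval (algF γA) = 1 := by rw [huv]; simp
    rw [eval_add, eval_mul, eval_mul, hPmγ, hPm'γ, hE0, map_zero, mul_zero, mul_zero,
      add_zero] at h1
    exact one_ne_zero h1.symm
  have hEprim : ∀ m, 1 ≤ m → m ≤ n → ¬ f ∣ (polyIterate ψ m).eval γA := fun m h1 h2 =>
    hprimA m h1 h2 (hEne m h1)
  -- basic polynomial facts
  have hΦmonic : (polyIterate ψ n).Monic := by rw [hψ]; exact polyIterate_monic _ _ n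
  have hPmonic : P.Monic := hΦmonic.map _
  have hPne : P ≠ 0 := hPmonic.ne_zero
  have hAKinj : Function.Injective (algebraMap (Polynomial κ) P.SplittingField) := by
    rw [IsScalarTower.algebraMap_eq (Polynomial κ) (RatFunc κ) P.SplittingField]
    exact (algebraMap (RatFunc κ) P.SplittingField).injective.comp hAFinj
  haveI : IsGalois (RatFunc κ) P.SplittingField :=
    IsGalois.of_separable_splitting_field (hsepA n hn)
  -- integral closure
  set B : Subalgebra (Polynomial κ) P.SplittingField :=
    integralClosure (Polynomial κ) P.SplittingField with hBdef
  have hABinj : Function.Injective (algebraMap (Polynomial κ) B) := by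
    intro x y hxy
    apply hAKinj
    rw [IsScalarTower.algebraMap_apply (Polynomial κ) B P.SplittingField,
      IsScalarTower.algebraMap_apply (Polynomial κ) B P.SplittingField, hxy]
  have hBKinj : Function.Injective (algebraMap B P.SplittingField) :=
    Subtype.val_injective
  have halgval : ∀ b : B, algebraMap B P.SplittingField b = b.1 := fun b => rfl
  -- the prime p = (f)
  have hfne : f ≠ 0 := hf.ne_zero
  have hgne : g ≠ 0 := by
    intro h
    rw [h] at hcop
    exact hf.not_isUnit (isCoprime_zero_right.mp hcop)
  set p : Ideal (Polynomial κ) := Ideal.span {f} with hpdef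
  have hp0 : p ≠ ⊥ := by
    rw [hpdef, ne_eq, Ideal.span_singleton_eq_bot]
    exact hfne
  have hfprime : Prime f := (UniqueFactorizationMonoid.irreducible_iff_prime).mp hf
  haveI hppr : p.IsPrime := (Ideal.span_singleton_prime hfne).mpr hfprime
  haveI hpm : p.IsMaximal := hppr.isMaximal hp0
  -- a prime of B above p
  haveI : Algebra.IsIntegral (Polynomial κ) B :=
    ⟨fun x => IsIntegralClosure.isIntegral (Polynomial κ) P.SplittingField x⟩
  obtain ⟨Q, -, hQpr, hQp⟩ := Ideal.exists_ideal_over_prime_of_isIntegral p (⊥ : Ideal B)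
    (by rw [Ideal.comap_bot_of_injective _ hABinj]; exact bot_le)
  haveI : Q.IsPrime := hQpr
  have hQ0 : Q ≠ ⊥ := by
    intro h
    exact hp0 (by rw [← hQp, h, Ideal.comap_bot_of_injective _ hABinj])
  set π := Ideal.Quotient.mk Q with hπdef
  set χ : Polynomial κ →+* B ⧸ Q := π.comp (algebraMap (Polynomial κ) B) with hχdef
  have hχzero : ∀ a : Polynomial κ, χ a = 0 ↔ f ∣ a := by
    intro a
    rw [hχdef, RingHom.comp_apply, hπdef, Ideal.Quotient.eq_zero_iff_mem,
      ← Ideal.mem_comap, hQp, hpdef, Ideal.mem_span_singleton]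
  -- roots of P
  set PK : Polynomial P.SplittingField := P.map (algebraMap (RatFunc κ) P.SplittingField)
    with hPKdef
  have hPKmonic : PK.Monic := hPmonic.map _
  have hPKΦ : PK = (polyIterate ψ n).map (algebraMap (Polynomial κ) P.SplittingField) := by
    rw [hPKdef, hPdef, Polynomial.map_map,
      ← IsScalarTower.algebraMap_eq (Polynomial κ) (RatFunc κ) P.SplittingField]
  have hPKsplit : PK = (Multiset.map (fun a => X - C a) PK.roots).prod :=
    (SplittingField.splits P).eq_prod_roots_of_monic hPKmonic
  have hrootint : ∀ x ∈ PK.roots, x ∈ B := by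
    intro x hx
    show IsIntegral (Polynomial κ) x
    refine ⟨polyIterate ψ n, hΦmonic, ?_⟩
    have hev : PK.eval x = 0 := (mem_roots'.mp hx).2
    rw [eval₂_eq_eval_map, ← hPKΦ]
    exact hev
  -- the key distinctness-mod-Q property of the roots
  have hdistQ : ∀ (bx : B), (bx : P.SplittingField) ∈ PK.roots →
      ∀ (by' : B), (by' : P.SplittingField) ∈ PK.roots → bx ≠ by' → bx - by' ∉ Q := by
    intro bx hbx by' hby hne hmem
    have hxyne : (bx : P.SplittingField) ≠ (by' : P.SplittingField) :=
      fun h => hne (Subtype.ext h)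
    -- factor PK with the two roots in front
    have hby2 : (by' : P.SplittingField) ∈ PK.roots.erase (bx : P.SplittingField) :=
      (Multiset.mem_erase_of_ne hxyne.symm).mpr hby
    set rest : Multiset P.SplittingField :=
      (PK.roots.erase (bx : P.SplittingField)).erase (by' : P.SplittingField) with hrest
    have hroots_decomp : PK.roots = (bx : P.SplittingField) ::ₘ (by' : P.SplittingField) ::ₘ rest := by
      rw [hrest, Multiset.cons_erase hby2, Multiset.cons_erase hbx]
    have hrestB : ∀ x ∈ rest, x ∈ B := by
      intro x hx
      exact hrootint x (Multiset.mem_of_mem_erase (Multiset.mem_of_mem_erase hx))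
    -- build the tail polynomial over B
    set TB : Polynomial B :=
      (rest.attach.map (fun x => X - C (⟨x.1, hrestB x.1 x.2⟩ : B))).prod with hTB
    have hTBmap : TB.map (algebraMap B P.SplittingField)
        = (rest.map (fun a => X - C a)).prod := by
      rw [hTB, Polynomial.map_multiset_prod, Multiset.map_map]
      congr 1
      have h1 : ∀ x : {x // x ∈ rest},
          (Polynomial.map (algebraMap B P.SplittingField) ∘ fun x : {x // x ∈ rest} =>
            X - C (⟨x.1, hrestB x.1 x.2⟩ : B)) x = ((fun a => X - C a) ∘ Subtype.val) x := by
        intro x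
        simp only [Function.comp_apply, Polynomial.map_sub, Polynomial.map_X, Polynomial.map_C]
        rw [halgval]
      rw [Multiset.map_congr rfl (fun x _ => h1 x), ← Multiset.map_map, Multiset.attach_map_val]
    have hfactB : (polyIterate ψ n).map (algebraMap (Polynomial κ) B)
        = (X - C bx) * ((X - C by') * TB) := by
      apply Polynomial.map_injective (algebraMap B P.SplittingField) hBKinj
      rw [Polynomial.map_map, ← IsScalarTower.algebraMap_eq (Polynomial κ) B P.SplittingField,
        ← hPKΦ]
      rw [Polynomial.map_mul, Polynomial.map_mul, Polynomial.map_sub, Polynomial.map_sub,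
        Polynomial.map_X, Polynomial.map_C, Polynomial.map_C, hTBmap, halgval, halgval]
      rw [hPKsplit, hroots_decomp]
      simp [Multiset.map_cons, Multiset.prod_cons]
    -- reduce mod Q
    have hzz : π bx = π by' := (Ideal.Quotient.mk_eq_mk_iff_sub_mem bx by').mpr hmem
    set z : B ⧸ Q := π bx with hzdef
    have hfactQ : (polyIterate ψ n).map χ = (X - C z) * ((X - C z) * TB.map π) := by
      have h1 := congrArg (Polynomial.map π) hfactB
      rw [Polynomial.map_map] at h1
      rw [hχdef, h1, Polynomial.map_mul, Polynomial.map_mul, Polynomial.map_sub,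
        Polynomial.map_sub, Polynomial.map_X, Polynomial.map_C, Polynomial.map_C,
        ← hzdef, ← hzz]
    have hψχ : ψ.map χ = (X - C (χ γA)) ^ 2 - C (χ c1A) := by
      rw [hψ]
      simp [Polynomial.map_sub, Polynomial.map_pow]
    have hev0 : ((polyIterate ψ n).map χ).eval z = 0 := by
      rw [hfactQ]
      simp
    have hev1 : (derivative ((polyIterate ψ n).map χ)).eval z = 0 := by
      rw [hfactQ, derivative_mul, derivative_mul]
      simp [derivative_X_sub_C]
    have h2Q : (2 : B ⧸ Q) ≠ 0 := by
      intro h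
      have hχ2 : χ (2 : Polynomial κ) = 0 := by rw [map_ofNat]; exact_mod_cast h
      have hdvd2 : f ∣ (2 : Polynomial κ) := (hχzero _).mp hχ2
      have h2u : IsUnit (2 : Polynomial κ) := by
        have h2k : IsUnit (2 : κ) := isUnit_iff_ne_zero.mpr h2κ
        have h2C : (C (2 : κ) : Polynomial κ) = 2 := by
          rw [map_ofNat]
        exact h2C ▸ h2k.map (C : κ →+* Polynomial κ)
      exact hf.not_isUnit (isUnit_of_dvd_unit hdvd2 h2u)
    have hprodzero : ∃ i ∈ Finset.range n,
        ((polyIterate (ψ.map χ) i).eval z - χ γA) = 0 := by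
      have hd : derivative ((polyIterate ψ n).map χ)
          = C 2 ^ n * ∏ i ∈ Finset.range n, (polyIterate (ψ.map χ) i - C (χ γA)) := by
        rw [polyIterate_map, hψχ, polyIterate_derivative, ← hψχ]
      rw [hd, eval_mul, eval_pow, eval_C, eval_prod] at hev1
      have h2n : (2 : B ⧸ Q) ^ n ≠ 0 := pow_ne_zero n h2Q
      have hpz : ∏ i ∈ Finset.range n, ((polyIterate (ψ.map χ) i - C (χ γA)).eval z) = 0 := by
        rcases mul_eq_zero.mp hev1 with h | h
        · exact absurd h h2n
        · exact h
      obtain ⟨i, hi, hz0⟩ := Finset.prod_eq_zero_iff.mp hpz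
      refine ⟨i, hi, ?_⟩
      rw [eval_sub, eval_C] at hz0
      exact hz0
    obtain ⟨i, hi, hz0⟩ := hprodzero
    have hin : i < n := Finset.mem_range.mp hi
    have hcomp : (polyIterate (ψ.map χ) (n - i)).eval (χ γA) = 0 := by
      have hiter : polyIterate (ψ.map χ) n
          = (polyIterate (ψ.map χ) (n - i)).comp (polyIterate (ψ.map χ) i) := by
        rw [← polyIterate_add]
        congr 1
        omega
      have hevn : (polyIterate (ψ.map χ) n).eval z = 0 := by
        rw [← polyIterate_map, hev0]
      rw [hiter, eval_comp] at hevn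
      rw [sub_eq_zero] at hz0
      rw [hz0] at hevn
      exact hevn
    have hχE : χ ((polyIterate ψ (n - i)).eval γA) = 0 := by
      have h1 : ((polyIterate ψ (n - i)).map χ).eval (χ γA)
          = χ ((polyIterate ψ (n - i)).eval γA) := by
        rw [eval_map, eval₂_at_apply]
      rw [← h1, polyIterate_map]
      exact hcomp
    have hfdvd : f ∣ (polyIterate ψ (n - i)).eval γA := (hχzero _).mp hχE
    exact hEprim (n - i) (by omega) (by omega) hfdvd
  -- the roots as a finset of B
  set SK : Finset P.SplittingField := PK.roots.toFinset with hSK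
  have hmemB : ∀ x ∈ SK, x ∈ B := fun x hx => hrootint x (Multiset.mem_toFinset.mp hx)
  set S : Finset B := SK.attach.image (fun x => (⟨x.1, hmemB x.1 x.2⟩ : B)) with hSdef
  have hSval : ∀ b ∈ S, (b : P.SplittingField) ∈ PK.roots := by
    intro b hb
    obtain ⟨x, -, rfl⟩ := Finset.mem_image.mp hb
    exact Multiset.mem_toFinset.mp x.2
  have hSof : ∀ (x) (hx : x ∈ SK), (⟨x, hmemB x hx⟩ : B) ∈ S := fun x hx =>
    Finset.mem_image.mpr ⟨⟨x, hx⟩, Finset.mem_attach _ _, rfl⟩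
  have himg : (fun b => algebraMap B P.SplittingField b) '' ↑S = ↑SK := by
    ext x
    constructor
    · rintro ⟨b, hb, rfl⟩
      show (algebraMap B P.SplittingField b) ∈ (↑SK : Set P.SplittingField)
      rw [halgval]
      exact Finset.mem_coe.mpr (Multiset.mem_toFinset.mpr (hSval b (Finset.mem_coe.mp hb)))
    · intro hx
      have hx' : x ∈ SK := Finset.mem_coe.mp hx
      exact ⟨⟨x, hmemB x hx'⟩, Finset.mem_coe.mpr (hSof x hx'), rfl⟩
  have hgen : Algebra.adjoin (RatFunc κ)
      ((fun b => algebraMap B P.SplittingField b) '' (S : Set B)) = ⊤ := by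
    rw [himg]
    have hrs : (↑SK : Set P.SplittingField) = P.rootSet P.SplittingField := by
      rw [hSK, rootSet_def, aroots_def, ← hPKdef]
    rw [hrs]
    exact IsSplittingField.adjoin_rootSet _ P
  have hstab : ∀ (σ : P.SplittingField ≃ₐ[RatFunc κ] P.SplittingField), ∀ b ∈ S,
      ∃ b' ∈ S, σ (algebraMap B P.SplittingField b) = algebraMap B P.SplittingField b' := by
    intro σ b hb
    have hroot : PK.eval (b : P.SplittingField) = 0 := (mem_roots'.mp (hSval b hb)).2
    have hσroot : σ (b : P.SplittingField) ∈ PK.roots := by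
      rw [mem_roots hPKmonic.ne_zero]
      show PK.eval (σ (b : P.SplittingField)) = 0
      have h1 : PK.eval (σ (b : P.SplittingField)) = aeval (σ (b : P.SplittingField)) P := by
        rw [hPKdef, eval_map, aeval_def]
      have h2 : aeval ((b : P.SplittingField)) P = PK.eval (b : P.SplittingField) := by
        rw [hPKdef, eval_map, aeval_def]
      have h3 : aeval (σ (b : P.SplittingField)) P = σ (aeval ((b : P.SplittingField)) P) :=
        aeval_algHom_apply (σ : P.SplittingField →ₐ[RatFunc κ] P.SplittingField) _ P
      rw [h1, h3, h2, hroot, map_zero]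
    refine ⟨⟨σ (b : P.SplittingField), hmemB _ (Multiset.mem_toFinset.mpr hσroot)⟩,
      hSof _ (Multiset.mem_toFinset.mpr hσroot), ?_⟩
    rw [halgval, halgval]
  have hdist : ∀ b ∈ S, ∀ b' ∈ S, b ≠ b' → b - b' ∉ Q := fun b hb b' hb' hne =>
    hdistQ b (hSval b hb) b' (hSval b' hb') hne
  have hinf : Set.Infinite (Set.range ((Ideal.Quotient.mk Q).comp
      (algebraMap (Polynomial κ) B))) := by
    have hres : Function.Injective (χ.comp (C : κ →+* Polynomial κ)) :=
      (χ.comp (C : κ →+* Polynomial κ)).injective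
    have h1 : Set.Infinite (Set.range (χ.comp (C : κ →+* Polynomial κ))) :=
      Set.infinite_range_of_injective hres
    refine h1.mono ?_
    rintro x ⟨u, rfl⟩
    exact ⟨C u, rfl⟩
  have hnotram := aux_unramified p hp0 Q hQp S hgen hstab hdist hinf
  -- now derive that the ramification index is ≥ 2 using the square root s
  haveI : IsDedekindDomain B :=
    IsIntegralClosure.isDedekindDomain (Polynomial κ) (RatFunc κ) P.SplittingField B
  have hmapne : p.map (algebraMap (Polynomial κ) B) ≠ ⊥ := by
    intro h
    exact hp0 ((Ideal.map_eq_bot_iff_of_injective hABinj).mp h)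
  have hle1 : p.map (algebraMap (Polynomial κ) B) ≤ Q :=
    Ideal.map_le_iff_le_comap.mpr (le_of_eq hQp.symm)
  have hcAne : cA ≠ 0 := by
    rw [hfacA]
    exact mul_ne_zero (pow_ne_zero _ hfne) hgne
  have hsval : s ^ 2 = algebraMap (Polynomial κ) P.SplittingField cA := by
    rw [IsScalarTower.algebraMap_apply (Polynomial κ) (RatFunc κ) P.SplittingField]
    exact hs
  have hsne : s ≠ 0 := by
    intro h
    apply hcAne
    apply hAKinj
    rw [map_zero, ← hsval, h]
    ring
  have hsint : s ∈ B := by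
    show IsIntegral (Polynomial κ) s
    refine ⟨X ^ 2 - C cA, monic_X_pow_sub_C cA (by norm_num), ?_⟩
    rw [eval₂_sub, eval₂_X_pow, eval₂_C, hsval, sub_self]
  set sB : B := ⟨s, hsint⟩ with hsBdef
  have hsB2 : sB * sB = algebraMap (Polynomial κ) B cA := by
    apply hBKinj
    have hL : algebraMap B P.SplittingField (sB * sB) = s * s := by
      rw [map_mul]; rfl
    have hR : algebraMap B P.SplittingField ((algebraMap (Polynomial κ) B) cA)
        = algebraMap (Polynomial κ) P.SplittingField cA :=
      (IsScalarTower.algebraMap_apply (Polynomial κ) B P.SplittingField cA).symm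
    rw [hL, hR, ← sq, hsval]
  set Is : Ideal B := Ideal.span {sB} with hIsdef
  have hIsne : Is ≠ ⊥ := by
    rw [hIsdef, ne_eq, Ideal.span_singleton_eq_bot]
    intro h
    apply hsne
    have := congrArg (algebraMap B P.SplittingField) h
    rw [halgval, map_zero] at this
    exact this
  have hIekey : Is * Is = (p.map (algebraMap (Polynomial κ) B)) ^ (2 * r + 1)
      * (Ideal.span {g}).map (algebraMap (Polynomial κ) B) := by
    rw [hIsdef, Ideal.span_singleton_mul_span_singleton, hsB2]
    have h1 : Ideal.span {cA} = p ^ (2 * r + 1) * Ideal.span {g} := by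
      rw [hpdef, Ideal.span_singleton_pow, Ideal.span_singleton_mul_span_singleton, ← hfacA]
    have h2 : ({(algebraMap (Polynomial κ) B) cA} : Set B)
        = (algebraMap (Polynomial κ) B) '' {cA} := (Set.image_singleton).symm
    rw [h2, ← Ideal.map_span, h1, Ideal.map_mul, Ideal.map_pow]
  -- counting normalized factors
  have hmapgne : (Ideal.span {g}).map (algebraMap (Polynomial κ) B) ≠ ⊥ := by
    intro h
    exact hgne (Ideal.span_singleton_eq_bot.mp ((Ideal.map_eq_bot_iff_of_injective hABinj).mp h))
  have hmappne : (p.map (algebraMap (Polynomial κ) B)) ^ (2 * r + 1) ≠ ⊥ := by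
    rw [← Ideal.zero_eq_bot]
    exact pow_ne_zero _ (by rw [Ideal.zero_eq_bot]; exact hmapne)
  have hcount : 2 * Multiset.count Q (UniqueFactorizationMonoid.normalizedFactors Is)
      = (2 * r + 1) * Multiset.count Q
        (UniqueFactorizationMonoid.normalizedFactors (p.map (algebraMap (Polynomial κ) B))) := by
    have hL : Multiset.count Q (UniqueFactorizationMonoid.normalizedFactors (Is * Is))
        = 2 * Multiset.count Q (UniqueFactorizationMonoid.normalizedFactors Is) := by
      rw [UniqueFactorizationMonoid.normalizedFactors_mul
        (by rw [Ideal.zero_eq_bot]; exact hIsne) (by rw [Ideal.zero_eq_bot]; exact hIsne),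
        Multiset.count_add]
      ring
    have hgcount : Multiset.count Q (UniqueFactorizationMonoid.normalizedFactors
        ((Ideal.span {g}).map (algebraMap (Polynomial κ) B))) = 0 := by
      rw [Multiset.count_eq_zero]
      intro hmem
      have hdvd := UniqueFactorizationMonoid.dvd_of_mem_normalizedFactors hmem
      have hgQ : algebraMap (Polynomial κ) B g ∈ Q :=
        (Ideal.le_of_dvd hdvd) (Ideal.mem_map_of_mem _ (Ideal.mem_span_singleton_self g))
      have hfg : f ∣ g := by
        rw [← Ideal.mem_span_singleton, ← hpdef, ← hQp, Ideal.mem_comap]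
        exact hgQ
      exact hf.not_isUnit (hcop.isUnit_of_dvd' dvd_rfl hfg)
    have hR : Multiset.count Q (UniqueFactorizationMonoid.normalizedFactors (Is * Is))
        = (2 * r + 1) * Multiset.count Q (UniqueFactorizationMonoid.normalizedFactors
          (p.map (algebraMap (Polynomial κ) B))) := by
      rw [hIekey, UniqueFactorizationMonoid.normalizedFactors_mul hmappne
        (by rw [Ideal.zero_eq_bot]; exact hmapgne), Multiset.count_add,
        UniqueFactorizationMonoid.normalizedFactors_pow, Multiset.count_nsmul, hgcount]
      ring
    rw [← hL, hR]
  have hecount : Ideal.ramificationIdx' p Q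
      = Multiset.count Q (UniqueFactorizationMonoid.normalizedFactors
        (p.map (algebraMap (Polynomial κ) B))) :=
    Ideal.IsDedekindDomain.ramificationIdx'_eq_normalizedFactors_count hmapne hQpr hQ0
  have he0 : Ideal.ramificationIdx' p Q ≠ 0 :=
    Ideal.IsDedekindDomain.ramificationIdx'_ne_zero hmapne hQpr hle1
  have heven : 2 ∣ Ideal.ramificationIdx' p Q := by
    have hdvd : 2 ∣ (2 * r + 1) * Ideal.ramificationIdx' p Q := by
      rw [hecount, ← hcount]
      exact ⟨_, rfl⟩
    rcases (Nat.Prime.dvd_mul Nat.prime_two).mp hdvd with h | h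
    · omega
    · exact h
  have he2 : 2 ≤ Ideal.ramificationIdx' p Q := by
    obtain ⟨t, ht⟩ := heven
    omega
  exact hnotram (le_trans Ideal.le_pow_ramificationIdx' (Ideal.pow_le_pow_right he2))

theorem stmt_8 {k : Type*} [Field k] (hchar : (2 : k) ≠ 0)
    (γ c₁ : Polynomial k)
    (φ : Polynomial (Polynomial k))
    (hφ : φ = (X - C γ) ^ 2 - C c₁)
    (c : ℕ → Polynomial k)
    (hc1 : c 1 = c₁)
    (hcn : ∀ m, 2 ≤ m → c m = (fun x => (x - γ) ^ 2 - c₁)^[m] γ)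
    -- the coefficient maps  k[t] → k^sep[t]  and  k[t] → k^sep(t)
    (ι : Polynomial k →+* Polynomial ↥(separableClosure k (AlgebraicClosure k)))
    (hι : ι = Polynomial.mapRingHom
      (algebraMap k ↥(separableClosure k (AlgebraicClosure k))))
    (Ψ : Polynomial k →+* RatFunc ↥(separableClosure k (AlgebraicClosure k)))
    (hΨ : Ψ = (algebraMap (Polynomial ↥(separableClosure k (AlgebraicClosure k)))
      (RatFunc ↥(separableClosure k (AlgebraicClosure k)))).comp ι)
    (hsep : ∀ m, 1 ≤ m → ((polyIterate φ m).map Ψ).Separable)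
    (n : ℕ) (hn : 1 ≤ n)
    (hirr : Irreducible ((polyIterate φ n).map Ψ))
    (f g : Polynomial ↥(separableClosure k (AlgebraicClosure k)))
    (hf : Irreducible f) (r : ℕ)
    (hfac : ι (c (n + 1)) = f ^ (2 * r + 1) * g)
    (hcop : IsCoprime f g)
    (hprim : ∀ i, 1 ≤ i → i ≤ n → ι (c i) ≠ 0 → ¬ f ∣ ι (c i)) :
    ¬ ∃ s : ((polyIterate φ n).map Ψ).SplittingField,
        s ^ 2 = algebraMap (RatFunc ↥(separableClosure k (AlgebraicClosure k)))
          ((polyIterate φ n).map Ψ).SplittingField (Ψ (c (n + 1))) := by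
  subst hΨ
  intro hex
  set κ' := ↥(separableClosure k (AlgebraicClosure k))
  have h2κ : (2 : κ') ≠ 0 := by
    intro h
    apply hchar
    have h2 : algebraMap k κ' 2 = (2 : κ') := map_ofNat _ 2
    exact (algebraMap k κ').injective (by rw [h2, h, map_zero])
  haveI : IsSepClosed κ' := (separableClosure.isSepClosure k (AlgebraicClosure k)).sep_closed
  haveI hκinf : Infinite κ' := sepClosed_infinite κ' h2κ
  have hφmapι : φ.map ι = (X - C (ι γ)) ^ 2 - C (ι c₁) := by
    rw [hφ]
    simp [Polynomial.map_sub, Polynomial.map_pow]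
  have hmap1 : ∀ m : ℕ, (polyIterate φ m).map ((algebraMap (Polynomial κ') (RatFunc κ')).comp ι)
      = (polyIterate ((X - C (ι γ)) ^ 2 - C (ι c₁)) m).map (algebraMap (Polynomial κ') (RatFunc κ')) := by
    intro m
    rw [← Polynomial.map_map, polyIterate_map, hφmapι]
  have hevalι : ∀ m : ℕ, (polyIterate ((X - C (ι γ)) ^ 2 - C (ι c₁)) m).eval (ι γ)
      = ι ((polyIterate φ m).eval γ) := by
    intro m
    rw [← hφmapι, ← polyIterate_map, eval_map, eval₂_at_apply]
  have hcm : ∀ m, 2 ≤ m → (polyIterate φ m).eval γ = c m := by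
    intro m hm
    rw [hcn m hm, polyIterate_eval]
    have : (fun x => φ.eval x) = fun x => (x - γ) ^ 2 - c₁ := by
      funext x
      rw [hφ]
      simp
    rw [this]
  have hc1' : (polyIterate φ 1).eval γ = - c 1 := by
    rw [polyIterate_one, hφ, hc1]
    simp
  have hsepA' : ∀ m, 1 ≤ m → (((polyIterate ((X - C (ι γ)) ^ 2 - C (ι c₁)) m)).map
      (algebraMap (Polynomial κ') (RatFunc κ'))).Separable := by
    intro m hm
    rw [← hmap1 m]
    exact hsep m hm
  have hprimA' : ∀ m, 1 ≤ m → m ≤ n →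
      (polyIterate ((X - C (ι γ)) ^ 2 - C (ι c₁)) m).eval (ι γ) ≠ 0 →
      ¬ f ∣ (polyIterate ((X - C (ι γ)) ^ 2 - C (ι c₁)) m).eval (ι γ) := by
    intro m h1 h2 hne
    rw [hevalι] at hne ⊢
    rcases eq_or_lt_of_le h1 with h | h
    · rw [← h, hc1'] at hne ⊢
      rw [map_neg, dvd_neg]
      rw [map_neg, neg_ne_zero] at hne
      exact hprim 1 le_rfl (le_trans h1 h2) hne
    · have hm2 : 2 ≤ m := h
      rw [hcm m hm2] at hne ⊢
      exact hprim m h1 h2 hne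
  have hmain := main_core h2κ (ι γ) (ι c₁) n hn hsepA' f g (ι (c (n + 1))) hf r hfac hcop hprimA'
  apply hmain
  rw [← hmap1 n]
  exact hex
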